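/- arXiv:1210.1635 — 6 statements merged into one kernel-verified Lean document; each statement's English description precedes it below -/
import Mathlib

section
/- Let G be a group and G′ a subgroup of finite index in G. Then r(G) ≤ r(G′) and rank(G) = rank(G′). -/
open scoped Pointwise

/-- `algA G i` is the set of elements of `G` whose centralizer contains a
free abelian subgroup of rank at most `i` as a subgroup of finite index. -/
def algA (G : Type*) [Group G] (i : ℕ) : Set G :=
  {g : G | ∃ H : Subgroup (Subgroup.centralizer ({g} : Set G)),
    H.FiniteIndex ∧ ∃ n : ℕ, n ≤ i ∧ Nonempty (H ≃* Multiplicative (Fin n → ℤ))}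

/-- `G` is covered by finitely many left translates of `algA G i`. -/
def algCovers (G : Type*) [Group G] (i : ℕ) : Prop :=
  ∃ F : Finset G, (⋃ g ∈ F, g • algA G i) = Set.univ

/-- `r(G)`: the least `i` such that `G` is a finite union of translates of `algA G i`
(`⊤` if there is no such `i`). -/
noncomputable def algr (G : Type*) [Group G] : ℕ∞ :=
  sInf {n : ℕ∞ | ∃ i : ℕ, n = (i : ℕ∞) ∧ algCovers G i}

/-- The algebraic rank of `G`: the supremum of `r(G*)` over all finite index
subgroups `G*` of `G`. -/
noncomputable def algRank (G : Type*) [Group G] : ℕ∞ :=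
  ⨆ (H : Subgroup G) (_ : H.FiniteIndex), algr H

lemma algA_map {G₂ G : Type*} [Group G₂] [Group G] (f : G₂ →* G)
    (hf : Function.Injective f) (hr : f.range.FiniteIndex) {i : ℕ} {y : G₂}
    (hy : y ∈ algA G₂ i) : f y ∈ algA G i := by
  haveI := hr
  obtain ⟨H, hHfi, n, hn, ⟨e⟩⟩ := hy
  have hmem : ∀ x : (Subgroup.centralizer ({y} : Set G₂)),
      (f.comp (Subgroup.centralizer ({y} : Set G₂)).subtype) x ∈
        Subgroup.centralizer ({f y} : Set G) := by
    intro x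
    rw [Subgroup.mem_centralizer_iff]
    rintro h (rfl : h = f y)
    have hx : y * (x : G₂) = (x : G₂) * y :=
      Subgroup.mem_centralizer_iff.mp x.2 y rfl
    simp only [MonoidHom.comp_apply, Subgroup.coe_subtype]
    rw [← map_mul, ← map_mul, hx]
  set c := (f.comp (Subgroup.centralizer ({y} : Set G₂)).subtype).codRestrict
    (Subgroup.centralizer ({f y} : Set G)) hmem with hcdef
  have hc : Function.Injective c := by
    intro a b hab
    have : f a = f b := congrArg Subtype.val hab
    exact Subtype.ext (hf this)
  have crange : c.range = f.range.subgroupOf (Subgroup.centralizer ({f y} : Set G)) := by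
    ext z
    simp only [MonoidHom.mem_range, Subgroup.mem_subgroupOf, MonoidHom.mem_range]
    constructor
    · rintro ⟨x, rfl⟩
      exact ⟨x, rfl⟩
    · rintro ⟨x, hx⟩
      have hxC₂ : x ∈ Subgroup.centralizer ({y} : Set G₂) := by
        rw [Subgroup.mem_centralizer_iff]
        intro h hh
        rw [Set.mem_singleton_iff] at hh
        rw [hh]
        apply hf
        have hz : (z : G) ∈ Subgroup.centralizer ({f y} : Set G) := z.2
        have h2 := Subgroup.mem_centralizer_iff.mp hz (f y) rfl
        rw [← hx] at h2
        simpa [map_mul, hcdef] using h2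
      refine ⟨⟨x, hxC₂⟩, ?_⟩
      exact Subtype.ext hx
  refine ⟨H.map c, ⟨?_⟩, n, hn, ⟨(Subgroup.equivMapOfInjective H c hc).symm.trans e⟩⟩
  have h1 : (H.map c).relIndex c.range = H.index := by
    rw [← Subgroup.index_comap, Subgroup.comap_map_eq_self_of_injective hc]
  have h2 : (H.map c).relIndex c.range * c.range.index = (H.map c).index :=
    Subgroup.relIndex_mul_index (H.map_le_range c)
  have h3 : c.range.index ≠ 0 := by
    rw [crange]
    exact (Subgroup.instFiniteIndex_subgroupOf f.range _).index_ne_zero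
  rw [← h2, h1]
  exact mul_ne_zero hHfi.index_ne_zero h3

lemma algCovers_of_map {G₂ G : Type*} [Group G₂] [Group G] (f : G₂ →* G)
    (hf : Function.Injective f) (hr : f.range.FiniteIndex) {i : ℕ}
    (h : algCovers G₂ i) : algCovers G i := by
  classical
  haveI := hr
  haveI : Fintype (G ⧸ f.range) := Fintype.ofFinite _
  obtain ⟨F₂, hF₂⟩ := h
  refine ⟨Finset.image (fun p : (G ⧸ f.range) × G₂ => p.1.out * f p.2)
    (Finset.univ ×ˢ F₂), ?_⟩
  rw [Set.eq_univ_iff_forall]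
  intro x
  set q : G ⧸ f.range := QuotientGroup.mk x with hq
  have ht : q.out⁻¹ * x ∈ f.range := QuotientGroup.eq.mp (QuotientGroup.out_eq' q)
  obtain ⟨z, hz⟩ := ht
  have hzmem : z ∈ (⋃ g ∈ F₂, g • algA G₂ i) := hF₂ ▸ Set.mem_univ z
  simp only [Set.mem_iUnion] at hzmem
  obtain ⟨g, hgF, hzg⟩ := hzmem
  have hmem : g⁻¹ * z ∈ algA G₂ i := Set.mem_smul_set_iff_inv_smul_mem.mp hzg
  simp only [Set.mem_iUnion]
  refine ⟨q.out * f g, Finset.mem_image.mpr ⟨(q, g), by simp [hgF], rfl⟩, ?_⟩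
  rw [Set.mem_smul_set_iff_inv_smul_mem]
  have key : (q.out * f g)⁻¹ • x = f (g⁻¹ * z) := by
    rw [map_mul, map_inv, smul_eq_mul, mul_inv_rev, mul_assoc, hz]
  rw [key]
  exact algA_map f hf hr hmem

lemma algr_le_of_map {G₂ G : Type*} [Group G₂] [Group G] (f : G₂ →* G)
    (hf : Function.Injective f) (hr : f.range.FiniteIndex) :
    algr G ≤ algr G₂ := by
  apply sInf_le_sInf
  rintro n ⟨i, rfl, hcov⟩
  exact ⟨i, rfl, algCovers_of_map f hf hr hcov⟩

lemma algr_le_of_equiv {G₂ G : Type*} [Group G₂] [Group G] (e : G₂ ≃* G) :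
    algr G ≤ algr G₂ := by
  refine algr_le_of_map e.toMonoidHom e.injective ?_
  rw [MonoidHom.range_eq_top_of_surjective _ e.surjective]
  infer_instance

lemma algr_congr {G₂ G : Type*} [Group G₂] [Group G] (e : G₂ ≃* G) :
    algr G₂ = algr G :=
  le_antisymm (algr_le_of_equiv e.symm) (algr_le_of_equiv e)

lemma algr_le_of_subgroup {G : Type*} [Group G] (G' : Subgroup G)
    (hG' : G'.FiniteIndex) : algr G ≤ algr G' := by
  refine algr_le_of_map G'.subtype G'.subtype_injective ?_
  rwa [Subgroup.range_subtype]

/-- If `G'` is a finite index subgroup of `G`, then `r(G) ≤ r(G')` and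
`rank(G) = rank(G')`. -/
theorem stmt_0 (G : Type*) [Group G] (G' : Subgroup G) (hG' : G'.FiniteIndex) :
    algr G ≤ algr G' ∧ algRank G = algRank G' := by
  haveI := hG'
  refine ⟨algr_le_of_subgroup G' hG', le_antisymm ?_ ?_⟩
  · refine iSup₂_le fun H hH => ?_
    haveI := hH
    have h1 : algr H ≤ algr ((H ⊓ G').subgroupOf H) :=
      algr_le_of_subgroup ((H ⊓ G').subgroupOf H) inferInstance
    have h2 : algr ((H ⊓ G').subgroupOf H) = algr ((H ⊓ G').subgroupOf G') :=
      algr_congr ((Subgroup.subgroupOfEquivOfLe (inf_le_left : H ⊓ G' ≤ H)).trans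
        (Subgroup.subgroupOfEquivOfLe (inf_le_right : H ⊓ G' ≤ G')).symm)
    refine le_trans h1 (le_trans (le_of_eq h2) ?_)
    exact le_iSup₂_of_le ((H ⊓ G').subgroupOf G') inferInstance le_rfl
  · refine iSup₂_le fun H hH => ?_
    have hK : (H.map G'.subtype).FiniteIndex := by
      constructor
      rw [Subgroup.index_map_subtype]
      exact mul_ne_zero hH.index_ne_zero hG'.index_ne_zero
    have h2 : algr H = algr (H.map G'.subtype) :=
      algr_congr (Subgroup.equivMapOfInjective H G'.subtype G'.subtype_injective)
    rw [h2]
    exact le_iSup₂_of_le (H.map G'.subtype) hK le_rfl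
end

section
/- Let G = G₁ × ⋯ × Gₙ be a direct product of finitely many groups. Then r(G) = r(G₁) + ⋯ + r(Gₙ) and rank(G) = rank(G₁) + ⋯ + rank(Gₙ), with the convention that a sum involving ∞ equals ∞. -/
open scoped Pointwise

/-! ### Free abelian group helpers -/

section FreeAbelian

/-- Reindexing of integer-valued function spaces, as an additive equivalence. -/
def funCongrInt {α β : Type*} (e : α ≃ β) : (α → ℤ) ≃+ (β → ℤ) :=
  { Equiv.piCongrLeft' (fun _ => ℤ) e with map_add' := fun _ _ => rfl }

/-- Uncurrying of integer-valued function spaces, as an additive equivalence. -/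
def piCurryInt {α : Type*} {β : α → Type*} : (∀ a, β a → ℤ) ≃+ ((Σ a, β a) → ℤ) :=
  { (Equiv.piCurry (fun (_ : α) (_ : β _) => ℤ)).symm with map_add' := fun _ _ => rfl }

/-- `Multiplicative` commutes with pi types. -/
def multPiEquiv {ι : Type*} (A : ι → Type*) [∀ i, AddGroup (A i)] :
    Multiplicative (∀ i, A i) ≃* ∀ i, Multiplicative (A i) where
  toFun x i := Multiplicative.ofAdd (Multiplicative.toAdd x i)
  invFun y := Multiplicative.ofAdd fun i => Multiplicative.toAdd (y i)
  left_inv _ := rfl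
  right_inv _ := rfl
  map_mul' _ _ := rfl

/-- A finite product of free abelian groups is free abelian. -/
noncomputable def piFinIntEquiv {ι : Type*} [Fintype ι] (c : ι → ℕ) :
    (∀ j, Multiplicative (Fin (c j) → ℤ)) ≃* Multiplicative (Fin (∑ j, c j) → ℤ) :=
  ((multPiEquiv _).symm.trans
    (AddEquiv.toMultiplicative (piCurryInt (β := fun j => Fin (c j))))).trans
    (AddEquiv.toMultiplicative (funCongrInt
      (Fintype.equivFinOfCardEq (by simp))))

/-- Rank monotonicity for free abelian groups. -/
lemma rank_le_of_injective {a b : ℕ}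
    (f : Multiplicative (Fin a → ℤ) →* Multiplicative (Fin b → ℤ))
    (hf : Function.Injective f) : a ≤ b := by
  let g : (Fin a → ℤ) →+ (Fin b → ℤ) :=
    { toFun := fun x => Multiplicative.toAdd (f (Multiplicative.ofAdd x))
      map_zero' := f.map_one
      map_add' := fun x y => f.map_mul _ _ }
  have hg : Function.Injective g.toIntLinearMap := fun x y h => hf h
  have := LinearMap.finrank_le_finrank_of_injective hg
  simpa [Module.finrank_fin_fun] using this

/-- A subgroup of a free abelian group of rank `m` is free abelian of rank at most `m`. -/
lemma subgroup_of_free {m : ℕ} (N : Subgroup (Multiplicative (Fin m → ℤ))) :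
    ∃ r ≤ m, Nonempty (N ≃* Multiplicative (Fin r → ℤ)) := by
  set N' : AddSubgroup (Fin m → ℤ) := Subgroup.toAddSubgroup' N with hN'
  set S : Submodule ℤ (Fin m → ℤ) := AddSubgroup.toIntSubmodule N' with hS
  obtain ⟨r, b⟩ := Submodule.basisOfPid (Pi.basisFun ℤ (Fin m)) S
  refine ⟨r, ?_, ⟨?_⟩⟩
  · have h1 : Module.finrank ℤ S = r := by
      simpa using Module.finrank_eq_card_basis b
    have h2 : Module.finrank ℤ S ≤ Module.finrank ℤ (Fin m → ℤ) := S.finrank_le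
    rwa [h1, Module.finrank_fin_fun] at h2
  · refine MulEquiv.trans ?_ (AddEquiv.toMultiplicative b.equivFun.toAddEquiv)
    exact
      { toFun := fun x =>
          Multiplicative.ofAdd (⟨Multiplicative.toAdd (x : Multiplicative (Fin m → ℤ)), x.2⟩ : S)
        invFun := fun y =>
          ⟨Multiplicative.ofAdd ((Multiplicative.toAdd y : S) : Fin m → ℤ),
            (Multiplicative.toAdd y).2⟩
        left_inv := fun _ => rfl
        right_inv := fun _ => rfl
        map_mul' := fun _ _ => rfl }

end FreeAbelian

/-! ### Subgroup index helpers -/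

section IndexHelpers

variable {G : Type*} [Group G]

lemma relindex_map_of_injective {G' : Type*} [Group G'] {f : G →* G'}
    (hf : Function.Injective f) (H K : Subgroup G) :
    (H.map f).relIndex (K.map f) = H.relIndex K := by
  rw [← Subgroup.relIndex_comap, Subgroup.comap_map_eq_self_of_injective hf]

lemma relindex_ne_zero_of_le {H C S : Subgroup G} (hS : S ≤ C) (h : H.relIndex C ≠ 0) :
    H.relIndex S ≠ 0 := by
  rw [← Subgroup.relIndex_subgroupOf hS]
  haveI : (H.subgroupOf C).FiniteIndex := ⟨h⟩
  exact Subgroup.FiniteIndex.index_ne_zero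

lemma map_centralizer_equiv {G' : Type*} [Group G'] (e : G ≃* G') (x : G) :
    (Subgroup.centralizer {x}).map e.toMonoidHom = Subgroup.centralizer {e x} := by
  ext y
  simp only [Subgroup.mem_map, Subgroup.mem_centralizer_singleton_iff]
  constructor
  · rintro ⟨z, hz, rfl⟩
    have := congrArg e hz
    simpa [map_mul] using this
  · intro hy
    refine ⟨e.symm y, ?_, by simp⟩
    have := congrArg e.symm hy
    simpa [map_mul] using this

end IndexHelpers

/-! ### `algA` and `algr` API -/

section AlgAPI

variable {G : Type*} [Group G]

lemma mem_algA_iff {g : G} {i : ℕ} :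
    g ∈ algA G i ↔ ∃ H : Subgroup G, H ≤ Subgroup.centralizer {g} ∧
      H.relIndex (Subgroup.centralizer {g}) ≠ 0 ∧
      ∃ n ≤ i, Nonempty (H ≃* Multiplicative (Fin n → ℤ)) := by
  constructor
  · rintro ⟨H, hH, n, hn, ⟨iso⟩⟩
    refine ⟨H.map (Subgroup.centralizer {g}).subtype, Subgroup.map_subtype_le H, ?_, n, hn,
      ⟨(Subgroup.equivMapOfInjective H _ (Subgroup.subtype_injective _)).symm.trans iso⟩⟩
    rw [Subgroup.relIndex, Subgroup.subgroupOf, Subgroup.comap_map_eq_self_of_injective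
      (Subgroup.subtype_injective _)]
    exact hH.index_ne_zero
  · rintro ⟨H, hle, hrel, n, hn, ⟨iso⟩⟩
    exact ⟨H.subgroupOf _, ⟨hrel⟩, n, hn, ⟨(Subgroup.subgroupOfEquivOfLe hle).trans iso⟩⟩

lemma algA_mono {i j : ℕ} (h : i ≤ j) : algA G i ⊆ algA G j := by
  rintro g ⟨H, hH, n, hn, hiso⟩
  exact ⟨H, hH, n, hn.trans h, hiso⟩

lemma mem_cover_iff {F : Finset G} {s : Set G} {x : G} :
    x ∈ ⋃ g ∈ F, g • s ↔ ∃ g ∈ F, g⁻¹ * x ∈ s := by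
  simp [Set.mem_smul_set_iff_inv_smul_mem, smul_eq_mul]

lemma algCovers_mono {i j : ℕ} (h : i ≤ j) (hc : algCovers G i) : algCovers G j := by
  obtain ⟨F, hF⟩ := hc
  refine ⟨F, Set.eq_univ_of_forall fun x => ?_⟩
  have hx : x ∈ (⋃ g ∈ F, g • algA G i) := by rw [hF]; trivial
  obtain ⟨g, hg, hm⟩ := mem_cover_iff.mp hx
  exact mem_cover_iff.mpr ⟨g, hg, algA_mono h hm⟩

lemma algr_le_of_covers {i : ℕ} (h : algCovers G i) : algr G ≤ (i : ℕ∞) :=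
  sInf_le ⟨i, rfl, h⟩

lemma algr_eq_sInf_covers (h : ∃ i : ℕ, algCovers G i) :
    algr G = ((sInf {i : ℕ | algCovers G i} : ℕ) : ℕ∞) := by
  apply le_antisymm
  · exact algr_le_of_covers (Nat.sInf_mem h)
  · refine le_sInf ?_
    rintro m ⟨i, rfl, hi⟩
    exact_mod_cast Nat.sInf_le hi

lemma algCovers_of_algr_le {k : ℕ} (h : algr G ≤ (k : ℕ∞)) : algCovers G k := by
  by_cases hne : ∃ i : ℕ, algCovers G i
  · have heq := algr_eq_sInf_covers hne
    rw [heq] at h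
    have hle : sInf {i : ℕ | algCovers G i} ≤ k := by exact_mod_cast h
    exact algCovers_mono hle (Nat.sInf_mem hne)
  · exfalso
    have : algr G = ⊤ := by
      rw [algr]
      refine (congrArg sInf ?_).trans sInf_empty
      ext m
      simp only [Set.mem_setOf_eq, Set.mem_empty_iff_false, iff_false]
      rintro ⟨i, rfl, hi⟩
      exact hne ⟨i, hi⟩
    rw [this, top_le_iff] at h
    exact (WithTop.coe_ne_top h.symm.symm).elim

lemma algA_map_s1 {G' : Type*} [Group G'] (e : G ≃* G') {i : ℕ} {x : G}
    (hx : x ∈ algA G i) : e x ∈ algA G' i := by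
  rw [mem_algA_iff] at hx ⊢
  obtain ⟨H, hle, hrel, n, hn, ⟨iso⟩⟩ := hx
  refine ⟨H.map e.toMonoidHom, ?_, ?_, n, hn, ⟨(e.subgroupMap H).symm.trans iso⟩⟩
  · rw [← map_centralizer_equiv e x]
    exact Subgroup.map_mono hle
  · rw [← map_centralizer_equiv e x, relindex_map_of_injective e.injective]
    exact hrel

lemma algCovers_map {G' : Type*} [Group G'] (e : G ≃* G') {i : ℕ}
    (h : algCovers G i) : algCovers G' i := by
  classical
  obtain ⟨F, hF⟩ := h
  refine ⟨F.image e, Set.eq_univ_of_forall fun y => ?_⟩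
  have hx : e.symm y ∈ (⋃ g ∈ F, g • algA G i) := by rw [hF]; trivial
  obtain ⟨g, hg, hm⟩ := mem_cover_iff.mp hx
  refine mem_cover_iff.mpr ⟨e g, Finset.mem_image_of_mem _ hg, ?_⟩
  have := algA_map_s1 e hm
  simpa [map_mul, map_inv] using this

lemma algr_map {G' : Type*} [Group G'] (e : G ≃* G') : algr G = algr G' := by
  apply le_antisymm
  · refine le_sInf ?_
    rintro m ⟨i, rfl, hi⟩
    exact algr_le_of_covers (algCovers_map e.symm hi)
  · refine le_sInf ?_
    rintro m ⟨i, rfl, hi⟩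
    exact algr_le_of_covers (algCovers_map e hi)

end AlgAPI

/-! ### Finite index subgroups -/

section FiniteIndexSubgroup

variable {G : Type*} [Group G]

lemma coe_mem_algA (K : Subgroup G) [K.FiniteIndex] {i : ℕ} {x : K}
    (hx : x ∈ algA K i) : (x : G) ∈ algA G i := by
  rw [mem_algA_iff] at hx ⊢
  obtain ⟨L, hle, hrel, n, hn, ⟨iso⟩⟩ := hx
  set C := Subgroup.centralizer ({(x : G)} : Set G) with hC
  have hmap : (Subgroup.centralizer ({x} : Set K)).map K.subtype = C ⊓ K := by
    ext y
    simp only [Subgroup.mem_map, Subgroup.mem_inf, Subgroup.mem_centralizer_singleton_iff, hC]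
    constructor
    · rintro ⟨z, hz, rfl⟩
      exact ⟨congrArg Subtype.val hz, z.2⟩
    · rintro ⟨hc, hyK⟩
      exact ⟨⟨y, hyK⟩, Subtype.ext hc, rfl⟩
  have hLle : L.map K.subtype ≤ C ⊓ K := hmap ▸ Subgroup.map_mono hle
  refine ⟨L.map K.subtype, hLle.trans inf_le_left, ?_, n, hn,
    ⟨(Subgroup.equivMapOfInjective L _ (Subgroup.subtype_injective K)).symm.trans iso⟩⟩
  have h1 : (L.map K.subtype).relIndex (C ⊓ K) ≠ 0 := by
    rw [← hmap, relindex_map_of_injective (Subgroup.subtype_injective K)]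
    exact hrel
  have h2 : (C ⊓ K).relIndex C ≠ 0 := by
    rw [inf_comm, Subgroup.inf_relIndex_right]
    refine relindex_ne_zero_of_le le_top ?_
    rw [Subgroup.relIndex_top_right]
    exact Subgroup.FiniteIndex.index_ne_zero
  have := Subgroup.relIndex_mul_relIndex (L.map K.subtype) (C ⊓ K) C hLle inf_le_left
  rw [← this]
  exact mul_ne_zero h1 h2

lemma algCovers_of_subgroup (K : Subgroup G) [K.FiniteIndex] {i : ℕ}
    (h : algCovers K i) : algCovers G i := by
  classical
  obtain ⟨F, hF⟩ := h
  haveI : Fintype (G ⧸ K) := Fintype.ofFinite _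
  refine ⟨((Finset.univ : Finset (G ⧸ K)).image Quotient.out ×ˢ F).image
      (fun p => p.1 * (p.2 : G)), Set.eq_univ_of_forall fun x => ?_⟩
  set r : G := (QuotientGroup.mk x : G ⧸ K).out with hr
  have hrx : r⁻¹ * x ∈ K := by
    have hmk : (QuotientGroup.mk r : G ⧸ K) = QuotientGroup.mk x := Quotient.out_eq _
    exact QuotientGroup.eq.mp hmk
  set y : K := ⟨r⁻¹ * x, hrx⟩ with hy
  have hmem : y ∈ (⋃ g ∈ F, g • algA (↥K) i) := by rw [hF]; trivial
  obtain ⟨t, ht, hm⟩ := mem_cover_iff.mp hmem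
  refine mem_cover_iff.mpr ⟨r * (t : G), ?_, ?_⟩
  · refine Finset.mem_image.mpr ⟨(r, t), ?_, rfl⟩
    exact Finset.mem_product.mpr ⟨Finset.mem_image_of_mem _ (Finset.mem_univ _), ht⟩
  · have hcoe := coe_mem_algA K hm
    have heq : (r * (t : G))⁻¹ * x = ((t⁻¹ * y : K) : G) := by
      rw [hy]
      push_cast
      group
    rw [heq]
    exact hcoe

lemma algr_le_subgroup (K : Subgroup G) [K.FiniteIndex] : algr G ≤ algr K := by
  refine le_sInf ?_
  rintro m ⟨i, rfl, hi⟩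
  exact algr_le_of_covers (algCovers_of_subgroup K hi)

end FiniteIndexSubgroup

/-! ### Pi groups -/

section PiGroups

lemma mem_of_mulSingle_mem {ι : Type*} [Fintype ι] [DecidableEq ι] {M : ι → Type*}
    [∀ i, Group (M i)] (H : Subgroup (∀ i, M i)) {y : ∀ i, M i}
    (h : ∀ i, Pi.mulSingle i (y i) ∈ H) : y ∈ H := by
  classical
  have key : ∀ s : Finset ι, (fun i => if i ∈ s then y i else 1) ∈ H := by
    intro s
    induction s using Finset.induction_on with
    | empty => exact H.one_mem
    | @insert j s hj ih =>
      have heq : (fun i => if i ∈ insert j s then y i else 1) =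
          Pi.mulSingle j (y j) * (fun i => if i ∈ s then y i else 1) := by
        funext i
        rcases eq_or_ne i j with rfl | hij
        · simp [hj]
        · simp [hij, Pi.mulSingle_eq_of_ne hij]
      rw [heq]
      exact H.mul_mem (h j) ih
  have := key Finset.univ
  simpa using this

/-- The product of subgroups as a group is the product of the groups. -/
def subgroupPiEquiv {ι : Type*} {G : ι → Type*} [∀ i, Group (G i)] (K : ∀ i, Subgroup (G i)) :
    (Subgroup.pi Set.univ K) ≃* ∀ i, K i where
  toFun x i := ⟨x.1 i, x.2 i (Set.mem_univ i)⟩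
  invFun y := ⟨fun i => y i, fun i _ => (y i).2⟩
  left_inv _ := rfl
  right_inv _ := rfl
  map_mul' _ _ := rfl

lemma pi_index_ne_zero {ι : Type*} [Fintype ι] {G : ι → Type*} [∀ i, Group (G i)]
    {K : ∀ i, Subgroup (G i)} (h : ∀ i, (K i).index ≠ 0) :
    (Subgroup.pi Set.univ K).index ≠ 0 := by
  have heq : Subgroup.pi Set.univ K = ⨅ i, (K i).comap (Pi.evalMonoidHom G i) := by
    ext x
    simp [Subgroup.mem_pi, Subgroup.mem_iInf, Pi.evalMonoidHom]
  have hfi : ∀ i, ((K i).comap (Pi.evalMonoidHom G i)).FiniteIndex := fun i => by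
    constructor
    rw [Subgroup.index_comap_of_surjective _ (Function.surjective_eval i)]
    exact h i
  rw [heq]
  haveI := Subgroup.finiteIndex_iInf hfi
  exact Subgroup.FiniteIndex.index_ne_zero

lemma centralizer_pi {n : ℕ} {G : Fin n → Type*} [∀ j, Group (G j)] (g : ∀ j, G j) :
    Subgroup.centralizer {g} = Subgroup.pi Set.univ (fun j => Subgroup.centralizer {g j}) := by
  ext x
  simp only [Subgroup.mem_centralizer_singleton_iff, Subgroup.mem_pi, Set.mem_univ,
    forall_true_left]
  constructor
  · intro h j
    exact congrFun h j
  · intro h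
    funext j
    exact h j

lemma algA_pi_of {n : ℕ} {G : Fin n → Type*} [∀ j, Group (G j)] {c : Fin n → ℕ} {x : ∀ j, G j}
    (hx : ∀ j, x j ∈ algA (G j) (c j)) : x ∈ algA (∀ j, G j) (∑ j, c j) := by
  choose H hFI r hr iso using hx
  set C := Subgroup.centralizer ({x} : Set (∀ j, G j)) with hCdef
  have hC : C = Subgroup.pi Set.univ (fun j => Subgroup.centralizer {x j}) := centralizer_pi x
  let Ψ : C ≃* ∀ j, Subgroup.centralizer {x j} :=
    (MulEquiv.subgroupCongr hC).trans (subgroupPiEquiv _)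
  let P : Subgroup (∀ j, Subgroup.centralizer {x j}) := Subgroup.pi Set.univ H
  have hP : P.index ≠ 0 := pi_index_ne_zero (fun j => (hFI j).index_ne_zero)
  refine ⟨P.comap Ψ.toMonoidHom, ?_, ∑ j, r j, Finset.sum_le_sum (fun j _ => hr j), ?_⟩
  · constructor
    rw [Subgroup.index_comap_of_surjective _ Ψ.surjective]
    exact hP
  · let e0 : (P.comap Ψ.toMonoidHom) ≃* P :=
      { toFun := fun z => ⟨Ψ z.1, z.2⟩
        invFun := fun w => ⟨Ψ.symm w.1, show Ψ (Ψ.symm w.1) ∈ P by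
          rw [MulEquiv.apply_symm_apply]; exact w.2⟩
        left_inv := fun z => Subtype.ext (Ψ.symm_apply_apply z.1)
        right_inv := fun w => Subtype.ext (Ψ.apply_symm_apply w.1)
        map_mul' := fun a b => Subtype.ext (map_mul Ψ a.1 b.1) }
    refine ⟨e0.trans
      (((subgroupPiEquiv H).trans (MulEquiv.piCongrRight fun j => (iso j).some)).trans
        (piFinIntEquiv r))⟩

lemma algA_pi_to {n : ℕ} {G : Fin n → Type*} [∀ j, Group (G j)] {k : ℕ} {x : ∀ j, G j}
    (hx : x ∈ algA (∀ j, G j) k) :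
    ∃ f : Fin n → ℕ, (∑ j, f j) ≤ k ∧ ∀ j, x j ∈ algA (G j) (f j) := by
  rw [mem_algA_iff] at hx
  obtain ⟨H, hle, hrel, m, hm, ⟨φ⟩⟩ := hx
  set C := Subgroup.centralizer ({x} : Set (∀ j, G j)) with hCdef
  set D : ∀ j, Subgroup (G j) := fun j => H.comap (MonoidHom.mulSingle G j) with hD
  have hDle : ∀ j, D j ≤ Subgroup.centralizer {x j} := by
    intro j y hy
    have hyH : Pi.mulSingle j y ∈ H := hy
    have hxc := hle hyH
    rw [Subgroup.mem_centralizer_singleton_iff] at hxc ⊢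
    have := congrFun hxc j
    simpa using this
  let ψ : ∀ j, D j →* H := fun j =>
    ((MonoidHom.mulSingle G j).comp (D j).subtype).codRestrict H (fun y => y.2)
  have hψinj : ∀ j, Function.Injective (ψ j) := by
    intro j a b h
    have h1 : Pi.mulSingle j (a : G j) = Pi.mulSingle j (b : G j) :=
      congrArg Subtype.val h
    exact Subtype.ext (Pi.mulSingle_injective _ h1)
  have hfree : ∀ j, ∃ r ≤ m, Nonempty (D j ≃* Multiplicative (Fin r → ℤ)) := by
    intro j
    obtain ⟨r, hrm, ⟨e⟩⟩ := subgroup_of_free (φ.toMonoidHom.comp (ψ j)).range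
    refine ⟨r, hrm, ⟨(MonoidHom.ofInjective ?_).trans e⟩⟩
    exact fun a b h => hψinj j (φ.injective h)
  choose r hrm iso using hfree
  let Φ : (∀ j, D j) →* H :=
    { toFun := fun y => ⟨fun j => (y j : G j),
        mem_of_mulSingle_mem H (fun j => (y j).2)⟩
      map_one' := rfl
      map_mul' := fun _ _ => rfl }
  have hΦinj : Function.Injective Φ := by
    intro a b h
    have h1 := congrArg Subtype.val h
    funext j
    exact Subtype.ext (congrFun h1 j)
  have hsum : (∑ j, r j) ≤ m := by
    let e1 : Multiplicative (Fin (∑ j, r j) → ℤ) ≃* ∀ j, D j :=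
      (piFinIntEquiv r).symm.trans (MulEquiv.piCongrRight fun j => (iso j).some.symm)
    exact rank_le_of_injective (φ.toMonoidHom.comp (Φ.comp e1.toMonoidHom))
      (φ.injective.comp (hΦinj.comp e1.injective))
  refine ⟨r, hsum.trans hm, fun j => ?_⟩
  rw [mem_algA_iff]
  refine ⟨D j, hDle j, ?_, r j, le_rfl, iso j⟩
  have hsub : (D j).subgroupOf (Subgroup.centralizer {x j}) =
      H.comap ((MonoidHom.mulSingle G j).comp (Subgroup.centralizer {x j}).subtype) := by
    rw [hD, Subgroup.subgroupOf, Subgroup.comap_comap]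
  rw [Subgroup.relIndex, hsub, Subgroup.index_comap]
  refine relindex_ne_zero_of_le ?_ hrel
  rintro z ⟨⟨y, hy⟩, rfl⟩
  rw [Subgroup.mem_centralizer_singleton_iff] at hy ⊢
  funext i
  rcases eq_or_ne i j with rfl | hij
  · simpa using hy
  · simp [Pi.mulSingle_eq_of_ne hij]

end PiGroups

/-! ### Partial covers and the main covering induction -/

section Covering

variable {n : ℕ}

/-- A partial covering of a product of groups by product tiles. -/
def PCov (G : Fin n → Type*) [∀ j, Group (G j)] (s : Finset (Fin n)) (k : ℕ) : Prop :=
  ∃ T : Finset ((∀ j, G j) × (Fin n → ℕ)),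
    (∀ t ∈ T, ∑ j ∈ s, t.2 j ≤ k) ∧
    ∀ x : ∀ j, G j, ∃ t ∈ T, ∀ j ∈ s, x j ∈ t.1 j • algA (G j) (t.2 j)

lemma pcov_sum_le {G : Fin n → Type*} [∀ j, Group (G j)] :
    ∀ (s : Finset (Fin n)) (k : ℕ), PCov G s k → ∑ j ∈ s, algr (G j) ≤ (k : ℕ∞) := by
  intro s
  classical
  induction s using Finset.induction_on with
  | empty => intro k _; simp
  | @insert j s hj ih =>
    intro k hP
    obtain ⟨T, hT, hcov⟩ := hP
    have hbound : ∀ t ∈ T, t.2 j ≤ k := by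
      intro t ht
      exact le_trans (Finset.single_le_sum (f := t.2) (fun _ _ => Nat.zero_le _)
        (Finset.mem_insert_self j s)) (hT t ht)
    have hcov_j : algCovers (G j) k := by
      refine ⟨T.image (fun t => t.1 j), Set.eq_univ_of_forall fun y => ?_⟩
      obtain ⟨t, htT, hmem⟩ := hcov (Function.update 1 j y)
      have hj' := hmem j (Finset.mem_insert_self j s)
      rw [Function.update_self] at hj'
      refine mem_cover_iff.mpr ⟨t.1 j, Finset.mem_image_of_mem _ htT, ?_⟩
      have := Set.mem_smul_set_iff_inv_smul_mem.mp hj'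
      rw [smul_eq_mul] at this
      exact algA_mono (hbound t htT) this
    have hEx : ∃ i : ℕ, algCovers (G j) i := ⟨k, hcov_j⟩
    set q := sInf {i : ℕ | algCovers (G j) i} with hq
    have halgr : algr (G j) = (q : ℕ∞) := by rw [hq]; exact algr_eq_sInf_covers hEx
    have hqk : q ≤ k := by rw [hq]; exact Nat.sInf_le hcov_j
    have hP' : PCov G s (k - q) := by
      set U : Finset ((∀ j', G j') × (Fin n → ℕ)) :=
        T.filter (fun t => q ≤ t.2 j) with hU
      refine ⟨U, ?_, ?_⟩
      · intro t ht
        rw [hU, Finset.mem_filter] at ht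
        have h1 := hT t ht.1
        rw [Finset.sum_insert hj] at h1
        omega
      · intro x
        set V : Finset ((∀ j', G j') × (Fin n → ℕ)) :=
          T.filter (fun t => ∀ i ∈ s, x i ∈ t.1 i • algA (G i) (t.2 i)) with hV
        have hcovV : ∀ y : G j, ∃ t ∈ V, y ∈ t.1 j • algA (G j) (t.2 j) := by
          intro y
          obtain ⟨t, htT, hmem⟩ := hcov (Function.update x j y)
          refine ⟨t, ?_, ?_⟩
          · rw [hV, Finset.mem_filter]
            refine ⟨htT, fun i hi => ?_⟩
            have hij : i ≠ j := by rintro rfl; exact hj hi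
            have := hmem i (Finset.mem_insert_of_mem hi)
            rwa [Function.update_of_ne hij] at this
          · have := hmem j (Finset.mem_insert_self j s)
            rwa [Function.update_self] at this
        have hexists : ∃ t ∈ V, q ≤ t.2 j := by
          by_contra hcon
          push_neg at hcon
          have hq0 : q ≠ 0 := by
            obtain ⟨t, htV, _⟩ := hcovV 1
            have := hcon t htV
            omega
          have hcovq : algCovers (G j) (q - 1) := by
            refine ⟨V.image (fun t => t.1 j), Set.eq_univ_of_forall fun y => ?_⟩
            obtain ⟨t, htV, hmem⟩ := hcovV y
            refine mem_cover_iff.mpr ⟨t.1 j, Finset.mem_image_of_mem _ htV, ?_⟩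
            have h2 := Set.mem_smul_set_iff_inv_smul_mem.mp hmem
            rw [smul_eq_mul] at h2
            exact algA_mono (by have := hcon t htV; omega) h2
          have hle2 : sInf {i : ℕ | algCovers (G j) i} ≤ q - 1 := Nat.sInf_le hcovq
          rw [← hq] at hle2
          omega
        obtain ⟨t, htV, htq⟩ := hexists
        rw [hV, Finset.mem_filter] at htV
        refine ⟨t, ?_, htV.2⟩
        rw [hU, Finset.mem_filter]
        exact ⟨htV.1, htq⟩
    have hsum := ih (k - q) hP'
    rw [Finset.sum_insert hj, halgr]
    calc (q : ℕ∞) + ∑ j' ∈ s, algr (G j')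
        ≤ (q : ℕ∞) + ((k - q : ℕ) : ℕ∞) := add_le_add le_rfl hsum
      _ = (k : ℕ∞) := by
          rw [← Nat.cast_add]
          congr 1
          omega

end Covering

/-! ### Main theorems -/

section Main

theorem algr_pi {n : ℕ} (G : Fin n → Type*) [∀ j, Group (G j)] :
    algr (∀ j, G j) = ∑ j, algr (G j) := by
  classical
  apply le_antisymm
  · rcases eq_or_ne (∑ j, algr (G j)) ⊤ with h | h
    · rw [h]; exact le_top
    · have hfin : ∀ j, algr (G j) ≠ ⊤ := by
        intro j htop
        apply h
        have hle : algr (G j) ≤ ∑ j', algr (G j') :=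
          Finset.single_le_sum (f := fun j' => algr (G j')) (fun _ _ => zero_le)
            (Finset.mem_univ j)
        rw [htop, top_le_iff] at hle
        exact hle
      have hex : ∀ j, ∃ c : ℕ, algr (G j) = (c : ℕ∞) := by
        intro j
        obtain ⟨c, hc⟩ := WithTop.ne_top_iff_exists.mp (hfin j)
        exact ⟨c, hc.symm⟩
      choose c hc using hex
      have hcov : ∀ j, algCovers (G j) (c j) := fun j => algCovers_of_algr_le (hc j).le
      choose F hF using hcov
      have hcovpi : algCovers (∀ j, G j) (∑ j, c j) := by
        refine ⟨Fintype.piFinset F, Set.eq_univ_of_forall fun x => ?_⟩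
        have hx : ∀ j, ∃ g ∈ F j, g⁻¹ * x j ∈ algA (G j) (c j) := by
          intro j
          refine mem_cover_iff.mp ?_
          rw [hF j]
          trivial
        choose g hgF hga using hx
        refine mem_cover_iff.mpr ⟨g, Fintype.mem_piFinset.mpr hgF, ?_⟩
        exact algA_pi_of (fun j => hga j)
      calc algr (∀ j, G j) ≤ ((∑ j, c j : ℕ) : ℕ∞) := algr_le_of_covers hcovpi
        _ = ∑ j, algr (G j) := by
            rw [Nat.cast_sum]
            exact Finset.sum_congr rfl fun j _ => (hc j).symm
  · rcases eq_or_ne (algr (∀ j, G j)) ⊤ with h | h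
    · rw [h]; exact le_top
    · obtain ⟨k, hk⟩ := WithTop.ne_top_iff_exists.mp h
      have hcov : algCovers (∀ j, G j) k := algCovers_of_algr_le hk.ge
      obtain ⟨F, hF⟩ := hcov
      have hP : PCov G Finset.univ k := by
        classical
        refine ⟨(F ×ˢ Fintype.piFinset (fun _ => Finset.range (k + 1))).filter
          (fun t => ∑ j ∈ Finset.univ, t.2 j ≤ k), fun t ht => (Finset.mem_filter.mp ht).2, ?_⟩
        intro x
        have hx : x ∈ (⋃ g ∈ F, g • algA (∀ j, G j) k) := by rw [hF]; trivial
        obtain ⟨g, hgF, hga⟩ := mem_cover_iff.mp hx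
        obtain ⟨f, hfk, hfa⟩ := algA_pi_to hga
        refine ⟨(g, f), Finset.mem_filter.mpr ⟨Finset.mem_product.mpr ⟨hgF, ?_⟩, hfk⟩, ?_⟩
        · refine Fintype.mem_piFinset.mpr fun j => Finset.mem_range.mpr ?_
          exact Nat.lt_succ_of_le (le_trans (Finset.single_le_sum
            (fun _ _ => Nat.zero_le _) (Finset.mem_univ j)) hfk)
        · intro j _
          rw [Set.mem_smul_set_iff_inv_smul_mem, smul_eq_mul]
          exact hfa j
      have := pcov_sum_le Finset.univ k hP
      rw [← hk]
      exact this

/-- Exchanging a finite sum and suprema in `ℕ∞`. -/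
lemma sum_iSup_le_iSup_sum {ι : Type*} [Fintype ι] {κ : ι → Type*} [∀ i, Nonempty (κ i)]
    (f : ∀ i, κ i → ℕ∞) :
    ∀ s : Finset ι, ∑ i ∈ s, ⨆ k, f i k ≤ ⨆ g : ∀ i, κ i, ∑ i ∈ s, f i (g i) := by
  classical
  intro s
  induction s using Finset.induction_on with
  | empty => simp
  | @insert j s hj ih =>
    rw [Finset.sum_insert hj]
    calc (⨆ k, f j k) + ∑ i ∈ s, ⨆ k, f i k
        ≤ (⨆ k, f j k) + ⨆ g : ∀ i, κ i, ∑ i ∈ s, f i (g i) := add_le_add le_rfl ih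
      _ = ⨆ k, ⨆ g : ∀ i, κ i, (f j k + ∑ i ∈ s, f i (g i)) := by
          rw [ENat.iSup_add]
          exact iSup_congr fun k => ENat.add_iSup _
      _ ≤ ⨆ g : ∀ i, κ i, ∑ i ∈ insert j s, f i (g i) := by
          refine iSup₂_le fun k g => ?_
          refine le_iSup_of_le (Function.update g j k) (le_of_eq ?_)
          rw [Finset.sum_insert hj, Function.update_self]
          congr 1
          refine Finset.sum_congr rfl fun i hi => ?_
          have hij : i ≠ j := by rintro rfl; exact hj hi
          rw [Function.update_of_ne hij]

theorem algRank_pi {n : ℕ} (G : Fin n → Type*) [∀ j, Group (G j)] :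
    algRank (∀ j, G j) = ∑ j, algRank (G j) := by
  classical
  apply le_antisymm
  · refine iSup₂_le fun H hH => ?_
    haveI := hH
    set K : ∀ j, Subgroup (G j) := fun j => H.comap (MonoidHom.mulSingle G j) with hK
    have hKfi : ∀ j, (K j).index ≠ 0 := by
      intro j
      rw [hK]
      rw [Subgroup.index_comap]
      refine relindex_ne_zero_of_le le_top ?_
      rw [Subgroup.relIndex_top_right]
      exact hH.index_ne_zero
    have hPle : Subgroup.pi Set.univ K ≤ H := by
      intro y hy
      exact mem_of_mulSingle_mem H (fun j => hy j (Set.mem_univ j))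
    have hPfi : (Subgroup.pi Set.univ K).index ≠ 0 := pi_index_ne_zero hKfi
    haveI hfi2 : ((Subgroup.pi Set.univ K).subgroupOf H).FiniteIndex := by
      constructor
      show (Subgroup.pi Set.univ K).relIndex H ≠ 0
      refine relindex_ne_zero_of_le le_top ?_
      rw [Subgroup.relIndex_top_right]
      exact hPfi
    calc algr H ≤ algr ((Subgroup.pi Set.univ K).subgroupOf H) := algr_le_subgroup _
      _ = algr (Subgroup.pi Set.univ K) := algr_map (Subgroup.subgroupOfEquivOfLe hPle)
      _ = algr (∀ j, K j) := algr_map (subgroupPiEquiv K)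
      _ = ∑ j, algr (K j) := algr_pi _
      _ ≤ ∑ j, algRank (G j) := Finset.sum_le_sum fun j _ =>
          le_iSup₂_of_le (K j) ⟨hKfi j⟩ le_rfl
  · have key : ∀ K : ∀ j, Subgroup (G j), (∀ j, (K j).index ≠ 0) →
        ∑ j, algr (K j) ≤ algRank (∀ j, G j) := by
      intro K hK
      have h1 : ∑ j, algr (K j) = algr (Subgroup.pi Set.univ K) := by
        rw [← algr_pi (fun j => ↥(K j))]
        exact (algr_map (subgroupPiEquiv K)).symm
      rw [h1]
      exact le_iSup₂_of_le (Subgroup.pi Set.univ K) ⟨pi_index_ne_zero hK⟩ le_rfl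
    haveI : ∀ j, Nonempty {K : Subgroup (G j) // K.FiniteIndex} :=
      fun j => ⟨⟨⊤, inferInstance⟩⟩
    have hsub : ∀ j, algRank (G j) = ⨆ p : {K : Subgroup (G j) // K.FiniteIndex}, algr p.1 := by
      intro j
      rw [algRank, iSup_subtype']
    calc ∑ j, algRank (G j)
        = ∑ j, ⨆ p : {K : Subgroup (G j) // K.FiniteIndex}, algr p.1 :=
          Finset.sum_congr rfl fun j _ => hsub j
      _ ≤ ⨆ g : ∀ j, {K : Subgroup (G j) // K.FiniteIndex}, ∑ j, algr (g j).1 :=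
          sum_iSup_le_iSup_sum _ Finset.univ
      _ ≤ algRank (∀ j, G j) :=
          iSup_le fun g => key (fun j => (g j).1) (fun j => (g j).2.index_ne_zero)

end Main

/-- For a finite direct product `G = G₁ × ⋯ × Gₙ`,
`r(G) = r(G₁) + ⋯ + r(Gₙ)` and `rank(G) = rank(G₁) + ⋯ + rank(Gₙ)`
(in `ℕ∞`, so that a sum involving `∞` equals `∞`). -/
theorem stmt_1 (n : ℕ) (G : Fin n → Type*) [∀ i, Group (G i)] :
    algr (∀ i, G i) = ∑ i, algr (G i) ∧ algRank (∀ i, G i) = ∑ i, algRank (G i) := by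
  exact ⟨algr_pi G, algRank_pi G⟩
end

section
/- Let (W,S) be an infinite, irreducible, non-affine right-angled Coxeter system with S finite. Let w ∈ W be an element admitting a reduced expression in which every generator of S appears and each generator appears an odd number of times. Then w is essential. -/
/-- A Coxeter matrix is right-angled if all off-diagonal entries are `2` or `∞`
(`0` encodes `∞` in Mathlib's convention, i.e. the order of `st` is `2` or `∞`). -/
def CoxeterMatrix.IsRightAngled {B : Type*} (M : CoxeterMatrix B) : Prop :=
  ∀ i j : B, i ≠ j → M i j = 2 ∨ M i j = 0

namespace CoxeterSystem

variable {B : Type*} {W : Type*} [Group W] {M : CoxeterMatrix B} (cs : CoxeterSystem M W)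

/-- The Coxeter system is irreducible: the generating set cannot be partitioned into two
nonempty subsets such that every generator in one commutes with every generator in the
other. -/
def IsIrreducible : Prop :=
  ¬ ∃ A : Set B, A.Nonempty ∧ Aᶜ.Nonempty ∧
      ∀ i ∈ A, ∀ j ∈ Aᶜ, Commute (cs.simple i) (cs.simple j)

/-- A word over `S` is reduced if no shorter word represents the same element of `W`. -/
def ReducedWord (l : List B) : Prop :=
  ∀ l' : List B, cs.wordProd l' = cs.wordProd l → l.length ≤ l'.length

/-- An element `w ∈ W` is essential if the only parabolic subgroup containing it is `W`
itself: whenever `w ∈ u W_J u⁻¹` (equivalently `u⁻¹ w u ∈ W_J`), one has `J = S`. -/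
def IsEssential (w : W) : Prop :=
  ∀ (u : W) (J : Set B),
    u⁻¹ * w * u ∈ Subgroup.closure (cs.simple '' J) → J = Set.univ

/-- `t` is an `s`-blocker if the generators `s` and `t` do not commute. -/
def IsBlocker (s t : B) : Prop := ¬ Commute (cs.simple s) (cs.simple t)

/-- A word is `s`-minimal if between any two consecutive occurrences of `s`
there is an `s`-blocker (vacuously so if `s` occurs at most once). -/
def SMinimal (l : List B) (s : B) : Prop :=
  ∀ l₁ l₂ l₃ : List B, l = l₁ ++ s :: l₂ ++ s :: l₃ → s ∉ l₂ →
    ∃ t ∈ l₂, cs.IsBlocker s t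

/-- A word `l` is `s`-good if it is `s`-minimal and, whenever `s` occurs at least twice
(with `l₁` the prefix before the first occurrence of `s` and `l₃` the suffix after the
last occurrence), the word `l₃ ++ l₁` contains an `s`-blocker. -/
def SGood (l : List B) (s : B) : Prop :=
  cs.SMinimal l s ∧
    ∀ l₁ l₂ l₃ : List B, l = l₁ ++ s :: l₂ ++ s :: l₃ → s ∉ l₁ → s ∉ l₃ →
      ∃ t ∈ l₃ ++ l₁, cs.IsBlocker s t

/-- `B(w)`: the set of "bad" generators of a word, i.e. those for which the word is
not good. -/
def badSet (l : List B) : Set B := {s : B | ¬ cs.SGood l s}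

end CoxeterSystem

/-- A group is affine (in the sense relevant here) if it contains a free abelian
subgroup of finite index. -/
def IsVirtuallyFreeAbelian (W : Type*) [Group W] : Prop :=
  ∃ H : Subgroup W, H.FiniteIndex ∧ ∃ ι : Type, Nonempty (H ≃* Multiplicative (ι →₀ ℤ))


section Aux

variable {B W : Type*} [Group W] {M : CoxeterMatrix B}

private def parityFun [DecidableEq B] (i : B) : Multiplicative (B → ZMod 2) :=
  Multiplicative.ofAdd (Pi.single i 1)

private theorem parity_liftable [DecidableEq B] (hra : M.IsRightAngled) :
    M.IsLiftable (parityFun (B := B)) := by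
  intro i j
  show (Multiplicative.ofAdd _ * Multiplicative.ofAdd _) ^ M i j = 1
  rw [← ofAdd_add, ← ofAdd_nsmul]
  have key : M i j • (Pi.single i 1 + Pi.single j 1 : B → ZMod 2) = 0 := by
    rcases eq_or_ne i j with rfl | hij
    · rw [M.diagonal i, one_nsmul]
      ext s
      simp [CharTwo.add_self_eq_zero]
    · rcases hra i j hij with h | h <;> rw [h]
      · ext s
        simp [two_nsmul, CharTwo.add_self_eq_zero, CharTwo.two_eq_zero]
      · simp
  rw [key, ofAdd_zero]

private theorem parity_count [DecidableEq B] (cs : CoxeterSystem M W)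
    (hra : M.IsRightAngled) (l : List B) (s : B) :
    Multiplicative.toAdd (cs.lift ⟨parityFun, parity_liftable hra⟩ (cs.wordProd l)) s
      = (l.count s : ZMod 2) := by
  induction l with
  | nil => simp
  | cons a t ih =>
    rw [cs.wordProd_cons, map_mul, cs.lift_apply_simple, toAdd_mul, Pi.add_apply, ih,
      List.count_cons]
    simp only [parityFun, toAdd_ofAdd]
    push_cast
    rcases eq_or_ne a s with rfl | h
    · simp [Pi.single_eq_same, add_comm]
    · simp [Pi.single_eq_of_ne (Ne.symm h), h]

end Aux

/-- In an infinite, irreducible, non-affine right-angled Coxeter system, any element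
admitting a reduced expression in which every generator appears and each generator
appears an odd number of times is essential. -/
theorem stmt_6 {B W : Type*} [Fintype B] [DecidableEq B] [Group W] {M : CoxeterMatrix B}
    (cs : CoxeterSystem M W) (hra : M.IsRightAngled) [Infinite W]
    (hirr : cs.IsIrreducible) (hnaff : ¬ IsVirtuallyFreeAbelian W)
    (w : W) (l : List B) (hl : cs.ReducedWord l) (hlw : cs.wordProd l = w)
    (hodd : ∀ s : B, Odd (l.count s)) :
    cs.IsEssential w := by
  intro u J hmem
  set φ := cs.lift ⟨parityFun, parity_liftable hra⟩ with hφ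
  -- the parity homomorphism is conjugation-invariant (abelian target)
  have hconj : φ (u⁻¹ * w * u) = φ w := by
    rw [map_mul, map_mul, map_inv, mul_comm, ← mul_assoc, mul_inv_cancel, one_mul]
  -- elements of the image of W_J are supported on J
  have hsupp : ∀ x ∈ Subgroup.closure (cs.simple '' J),
      ∀ s ∉ J, Multiplicative.toAdd (φ x) s = 0 := by
    intro x hx
    refine Subgroup.closure_induction ?_ ?_ ?_ ?_ hx
    · rintro _ ⟨j, hj, rfl⟩ s hs
      rw [hφ, cs.lift_apply_simple]
      exact Pi.single_eq_of_ne (by rintro rfl; exact hs hj) 1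
    · intro s _; simp
    · intro x y _ _ hx hy s hs
      rw [map_mul]
      show Multiplicative.toAdd (φ x) s + Multiplicative.toAdd (φ y) s = 0
      rw [hx s hs, hy s hs, add_zero]
    · intro x _ hx s hs
      rw [map_inv]
      show -Multiplicative.toAdd (φ x) s = 0
      rw [hx s hs, neg_zero]
  ext s
  simp only [Set.mem_univ, iff_true]
  by_contra hs
  have h0 : Multiplicative.toAdd (φ (u⁻¹ * w * u)) s = 0 := hsupp _ hmem s hs
  rw [hconj, ← hlw, parity_count cs hra] at h0
  obtain ⟨k, hk⟩ := hodd s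
  rw [hk] at h0
  push_cast at h0
  simp [CharTwo.two_eq_zero] at h0
end

section
/- Let (W,S) be a right-angled Coxeter system with S finite. Then every reduced word over S is s-minimal for every generator s occurring in it. -/
/-- In a right-angled Coxeter system, every reduced word is `s`-minimal for every
generator `s` occurring in it. -/
theorem stmt_8 {B W : Type*} [Fintype B] [Group W] {M : CoxeterMatrix B}
    (cs : CoxeterSystem M W) (hra : M.IsRightAngled)
    (l : List B) (hl : cs.ReducedWord l) (s : B) (hs : s ∈ l) :
    cs.SMinimal l s := by
  intro l₁ l₂ l₃ heq hns
  by_contra hno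
  push_neg at hno
  have hc : Commute (cs.simple s) (cs.wordProd l₂) := by
    rw [CoxeterSystem.wordProd]
    refine Commute.list_prod_right _ _ (fun x hx => ?_)
    obtain ⟨t, ht, rfl⟩ := List.mem_map.mp hx
    have := hno t ht
    unfold CoxeterSystem.IsBlocker at this
    exact not_not.mp this
  have heqw : cs.wordProd (l₁ ++ l₂ ++ l₃) = cs.wordProd l := by
    rw [heq]
    simp only [CoxeterSystem.wordProd_append, CoxeterSystem.wordProd_cons]
    rw [hc.eq, mul_assoc, mul_assoc, mul_assoc (cs.wordProd l₂), ← mul_assoc (cs.simple s),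
      cs.simple_mul_simple_self, one_mul]
  have hlen := hl _ heqw
  rw [heq] at hlen
  simp at hlen
end

section
/- Let Γ be a finite simple graph with vertex set I, and let Γ′ be the finite simple graph with vertex set I × {−1, 1} in which, for ε ∈ {−1, 1}, vertices (i, ε) and (j, ε) are adjacent if and only if i and j are adjacent in Γ, and vertices (i, −1) and (j, 1) are adjacent if and only if i ≠ j and i and j are adjacent in Γ. Then Γ is a join if and only if Γ′ is a join. -/
/-- A simple graph is a join if its vertex set can be partitioned into two nonempty
sets such that every vertex of one is adjacent to every vertex of the other. -/
def SimpleGraph.IsJoin {V : Type*} (G : SimpleGraph V) : Prop :=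
  ∃ A : Set V, A.Nonempty ∧ Aᶜ.Nonempty ∧ ∀ u ∈ A, ∀ v ∈ Aᶜ, G.Adj u v

/-- The graph `Γ′` associated to `Γ`: its vertex set is `V × {−1, 1}` (with `{−1, 1}`
realized as `ℤˣ`); vertices `(i, ε)` and `(j, ε)` on the same side are adjacent iff
`i` and `j` are adjacent in `Γ`, and vertices `(i, −1)` and `(j, 1)` on opposite sides
are adjacent iff `i ≠ j` and `i` and `j` are adjacent in `Γ`. -/
def gammaPrime {V : Type*} (G : SimpleGraph V) : SimpleGraph (V × ℤˣ) where
  Adj p q := (p.2 = q.2 ∧ G.Adj p.1 q.1) ∨ (p.2 ≠ q.2 ∧ p.1 ≠ q.1 ∧ G.Adj p.1 q.1)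
  symm := ⟨by
    rintro ⟨i, e⟩ ⟨j, f⟩ (⟨h1, h2⟩ | ⟨h1, h2, h3⟩)
    · exact Or.inl ⟨h1.symm, h2.symm⟩
    · exact Or.inr ⟨h1.symm, h2.symm, h3.symm⟩⟩
  loopless := ⟨by
    rintro ⟨i, e⟩ (⟨-, h⟩ | ⟨h, -⟩)
    · exact G.irrefl h
    · exact h rfl⟩

/-- `Γ` is a join if and only if `Γ′` is a join. -/
theorem stmt_16 {V : Type*} [Fintype V] (G : SimpleGraph V) :
    G.IsJoin ↔ (gammaPrime G).IsJoin := by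
  constructor
  · rintro ⟨A, ⟨a, ha⟩, ⟨b, hb⟩, hadj⟩
    refine ⟨A ×ˢ (Set.univ : Set ℤˣ), ⟨(a, 1), ha, trivial⟩, ⟨(b, 1), ?_⟩, ?_⟩
    · simpa using hb
    · rintro ⟨i, e⟩ ⟨hi, -⟩ ⟨j, f⟩ hj
      simp only [Set.mem_compl_iff, Set.mem_prod, Set.mem_univ, and_true] at hj
      have hGij : G.Adj i j := hadj i hi j hj
      by_cases hef : e = f
      · exact Or.inl ⟨hef, hGij⟩
      · exact Or.inr ⟨hef, fun h : i = j => hj (h ▸ hi), hGij⟩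
  · rintro ⟨B, hB, hBc, hadj⟩
    have hnadj : ∀ i : V, ¬ (gammaPrime G).Adj (i, 1) (i, -1) := by
      rintro i (⟨h, -⟩ | ⟨-, h, -⟩)
      · have : (1 : ℤ) = -1 := by simpa using congrArg Units.val h
        omega
      · exact h rfl
    have hsame : ∀ i : V, (i, (1 : ℤˣ)) ∈ B ↔ (i, (-1 : ℤˣ)) ∈ B := by
      intro i
      constructor
      · intro h1
        by_contra h2
        exact hnadj i (hadj _ h1 _ h2)
      · intro h1
        by_contra h2
        exact hnadj i ((gammaPrime G).adj_symm (hadj _ h1 _ h2))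
    refine ⟨{i | (i, (1 : ℤˣ)) ∈ B}, ?_, ?_, ?_⟩
    · obtain ⟨⟨i, e⟩, hi⟩ := hB
      rcases Int.units_eq_one_or e with rfl | rfl
      · exact ⟨i, hi⟩
      · exact ⟨i, (hsame i).mpr hi⟩
    · obtain ⟨⟨i, e⟩, hi⟩ := hBc
      rcases Int.units_eq_one_or e with rfl | rfl
      · exact ⟨i, hi⟩
      · exact ⟨i, fun h => hi ((hsame i).mp h)⟩
    · intro i hi j hj
      have := hadj (i, 1) hi (j, 1) hj
      rcases this with ⟨-, h⟩ | ⟨-, -, h⟩ <;> exact h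
end

section
/- Let Γ be a finite simple graph containing two distinct non-adjacent vertices. Then the right-angled Artin group A_Γ contains no free abelian subgroup of finite index. -/
/-- The commutator relators of a right-angled Artin group: one relator
`u v u⁻¹ v⁻¹` for each edge `{u, v}` of the graph. -/
def raagRels {V : Type*} (G : SimpleGraph V) : Set (FreeGroup V) :=
  {r | ∃ u v : V, G.Adj u v ∧
    r = FreeGroup.of u * FreeGroup.of v * (FreeGroup.of u)⁻¹ * (FreeGroup.of v)⁻¹}

/-- The right-angled Artin group `A_Γ` of a finite simple graph `Γ`:
`⟨V ∣ uv = vu whenever {u,v} is an edge⟩`. -/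
def RAAG {V : Type*} (G : SimpleGraph V) : Type _ := PresentedGroup (raagRels G)

noncomputable instance {V : Type*} (G : SimpleGraph V) : Group (RAAG G) :=
  inferInstanceAs (Group (PresentedGroup (raagRels G)))

namespace RaagAux

abbrev M := Matrix (Fin 2) (Fin 2) ℤ

def A : Mˣ :=
  ⟨!![1, 2; 0, 1], !![1, -2; 0, 1],
    by simp [Matrix.mul_fin_two, Matrix.one_fin_two],
    by simp [Matrix.mul_fin_two, Matrix.one_fin_two]⟩

def B : Mˣ :=
  ⟨!![1, 0; 2, 1], !![1, 0; -2, 1],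
    by simp [Matrix.mul_fin_two, Matrix.one_fin_two],
    by simp [Matrix.mul_fin_two, Matrix.one_fin_two]⟩

lemma A_pow (n : ℕ) : ((A ^ n : Mˣ) : M) = !![1, 2 * (n : ℤ); 0, 1] := by
  induction n with
  | zero => simp [Matrix.one_fin_two]
  | succ k ih =>
      rw [pow_succ, Units.val_mul, ih]
      show _ = !![(1 : ℤ), 2 * (k + 1 : ℕ); 0, 1]
      push_cast
      simp [A, Matrix.mul_fin_two]
      ring

lemma B_pow (n : ℕ) : ((B ^ n : Mˣ) : M) = !![1, 0; 2 * (n : ℤ), 1] := by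
  induction n with
  | zero => simp [Matrix.one_fin_two]
  | succ k ih =>
      rw [pow_succ, Units.val_mul, ih]
      show _ = !![(1 : ℤ), 0; 2 * (k + 1 : ℕ), 1]
      push_cast
      simp [B, Matrix.mul_fin_two]
      ring

lemma pow_not_commute {n m : ℕ} (hn : 0 < n) (hm : 0 < m) :
    A ^ n * B ^ m ≠ B ^ m * A ^ n := by
  intro h
  have h' : ((A ^ n * B ^ m : Mˣ) : M) = ((B ^ m * A ^ n : Mˣ) : M) := by rw [h]
  rw [Units.val_mul, Units.val_mul, A_pow, B_pow, Matrix.mul_fin_two,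
    Matrix.mul_fin_two] at h'
  have h00 := congrFun (congrFun h' 0) 0
  simp at h00
  omega

end RaagAux

open RaagAux in
/-- If a finite simple graph `Γ` has two distinct non-adjacent vertices, then the
right-angled Artin group `A_Γ` contains no free abelian subgroup of finite index. -/
theorem stmt_18 {V : Type*} [Fintype V] (G : SimpleGraph V)
    (u v : V) (huv : u ≠ v) (hadj : ¬ G.Adj u v) :
    ¬ ∃ H : Subgroup (RAAG G), H.FiniteIndex ∧
        ∃ ι : Type, Nonempty (H ≃* Multiplicative (ι →₀ ℤ)) := by
  classical
  rintro ⟨H, hFI, ι, ⟨e⟩⟩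
  -- the representation V → Mˣ
  set f : V → Mˣ := fun w => if w = u then A else if w = v then B else 1 with hf
  have hrel : ∀ r ∈ raagRels G, FreeGroup.lift f r = 1 := by
    rintro r ⟨x, y, hxy, rfl⟩
    simp only [map_mul, map_inv, FreeGroup.lift_apply_of]
    have hcomm : f x * f y = f y * f x := by
      by_cases hx : x = u
      · by_cases hy : y = v
        · exact absurd (hx ▸ hy ▸ hxy) hadj
        · by_cases hy' : y = u
          · simp [hf, hx, hy']
          · simp [hf, hx, hy, hy']
      · by_cases hx' : x = v
        · by_cases hy : y = u
          · exact absurd (hx' ▸ hy ▸ hxy).symm hadj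
          · by_cases hy' : y = v
            · simp [hf, hx, hx', hy, hy']
            · simp [hf, hx, hx', hy, hy']
        · simp [hf, hx, hx']
    rw [hcomm]
    group
  let φ : RAAG G →* Mˣ := PresentedGroup.toGroup hrel
  -- elements of H commute
  have Hcomm : ∀ x y : RAAG G, x ∈ H → y ∈ H → x * y = y * x := by
    intro x y hx hy
    have : (⟨x, hx⟩ : H) * ⟨y, hy⟩ = ⟨y, hy⟩ * ⟨x, hx⟩ := by
      apply e.injective
      rw [map_mul, map_mul, mul_comm]
    exact Subtype.ext_iff.1 this
  -- powers of the generators land in H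
  have hidx : H.index ≠ 0 := hFI.index_ne_zero
  obtain ⟨n, hn, -, hgn⟩ :=
    Subgroup.exists_pow_mem_of_index_ne_zero hidx (PresentedGroup.of (rels := raagRels G) u)
  obtain ⟨m, hm, -, hhm⟩ :=
    Subgroup.exists_pow_mem_of_index_ne_zero hidx (PresentedGroup.of (rels := raagRels G) v)
  have hc := Hcomm _ _ hgn hhm
  have := congrArg φ hc
  erw [map_mul, map_mul, map_pow, map_pow] at this
  have hu' : φ (PresentedGroup.of u) = A := by
    show PresentedGroup.toGroup hrel (PresentedGroup.of u) = A
    rw [PresentedGroup.toGroup.of]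
    simp [hf]
  have hv' : φ (PresentedGroup.of v) = B := by
    show PresentedGroup.toGroup hrel (PresentedGroup.of v) = B
    rw [PresentedGroup.toGroup.of]
    simp [hf, huv.symm]
  rw [hu', hv'] at this
  exact pow_not_commute hn hm this
end
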